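/- Let p = (p_i)_{i∈ℕ} be a probability vector on ℕ and let (ξ_j)_{j∈ℕ} be an i.i.d. sequence of ℕ-valued random variables with P(ξ_j = i) = p_i. Let (a(m))_{m∈ℕ} be a sequence of positive reals such that ∑_{m=1}^∞ a(m)^{2n} < ∞ for some n ∈ ℕ. Then, almost surely, a(m)√m · (∑_{i=1}^∞ (μ_i^m − p_i)²)^{1/2} → 0 as m → ∞, where μ_i^m := (1/m) ∑_{j=1}^m 1{ξ_j = i}. -/

import Mathlib

open MeasureTheory ProbabilityTheory Finset

namespace Stmt17Aux

noncomputable def Kk (p : ℕ → ℝ) (x y : ℕ) : ℝ :=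
  (if x = y then 1 else 0) - p x - p y + ∑' i, p i ^ 2

def deg {n : ℕ} (f : Fin n → ℕ × ℕ) (j : ℕ) : ℕ :=
  ∑ k, ((if (f k).1 = j then 1 else 0) + (if (f k).2 = j then 1 else 0))

section KFacts
variable {p : ℕ → ℝ} (hp0 : ∀ i, 0 ≤ p i) (hp1 : HasSum p 1)
include hp0 hp1

theorem hple1 (i : ℕ) : p i ≤ 1 := le_hasSum hp1 i fun j _ => hp0 j

theorem hsq_summable : Summable (fun i => p i ^ 2) := by
  refine Summable.of_nonneg_of_le (fun i => sq_nonneg _) (fun i => ?_) hp1.summable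
  calc p i ^ 2 = p i * p i := pow_two _
    _ ≤ p i * 1 := mul_le_mul_of_nonneg_left (hple1 hp0 hp1 i) (hp0 i)
    _ = p i := mul_one _

omit hp0 hp1 in
theorem hs_nonneg : 0 ≤ ∑' i, p i ^ 2 := tsum_nonneg fun i => sq_nonneg _

theorem hs_le_one : ∑' i, p i ^ 2 ≤ 1 := by
  rw [← hp1.tsum_eq]
  refine Summable.tsum_le_tsum (fun i => ?_) (hsq_summable hp0 hp1) hp1.summable
  calc p i ^ 2 ≤ p i * 1 := by rw [sq]; exact mul_le_mul_of_nonneg_left (hple1 hp0 hp1 i) (hp0 i)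
    _ = p i := mul_one _

theorem Kabs (x y : ℕ) : |Kk p x y| ≤ 4 := by
  unfold Kk
  have h1 : |(if x = y then (1:ℝ) else 0)| ≤ 1 := by split <;> simp
  have h2 : |p x| ≤ 1 := abs_le.2 ⟨by linarith [hp0 x], hple1 hp0 hp1 x⟩
  have h3 : |p y| ≤ 1 := abs_le.2 ⟨by linarith [hp0 y], hple1 hp0 hp1 y⟩
  have h4 : |∑' i, p i ^ 2| ≤ 1 := abs_le.2 ⟨by linarith [hs_nonneg (p := p)], hs_le_one hp0 hp1⟩
  calc |(if x = y then (1:ℝ) else 0) - p x - p y + ∑' i, p i ^ 2|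
      ≤ |(if x = y then (1:ℝ) else 0) - p x - p y| + |∑' i, p i ^ 2| := abs_add_le _ _
    _ ≤ (|(if x = y then (1:ℝ) else 0) - p x| + |p y|) + |∑' i, p i ^ 2| := by
        gcongr; exact abs_sub _ _
    _ ≤ ((|(if x = y then (1:ℝ) else 0)| + |p x|) + |p y|) + |∑' i, p i ^ 2| := by
        gcongr; exact abs_sub _ _
    _ ≤ 4 := by linarith

omit hp0 hp1 in
theorem Ksymm (x y : ℕ) : Kk p x y = Kk p y x := by
  unfold Kk
  have : (if x = y then (1:ℝ) else 0) = (if y = x then (1:ℝ) else 0) := by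
    simp [eq_comm]
  rw [this]; ring

theorem Kdeg (y : ℕ) : HasSum (fun x => p x * Kk p x y) 0 := by
  have hs : HasSum (fun i => p i ^ 2) (∑' i, p i ^ 2) := (hsq_summable hp0 hp1).hasSum
  have h1 : HasSum (fun x => if x = y then p x else 0) (p y) := by
    have : (fun x => if x = y then p x else 0) = (fun x => if x = y then p y else 0) := by
      funext x; split <;> simp_all
    rw [this]; exact hasSum_ite_eq y (p y)
  have h2 : HasSum (fun x => p x * (∑' i, p i ^ 2)) (∑' i, p i ^ 2) := by
    simpa using hp1.mul_right (∑' i, p i ^ 2)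
  have h3 : HasSum (fun x => p x * p y) (p y) := by simpa using hp1.mul_right (p y)
  have key : HasSum (fun x => ((if x = y then p x else 0) + p x * (∑' i, p i ^ 2))
      - p x ^ 2 - p x * p y) (p y + (∑' i, p i ^ 2) - (∑' i, p i ^ 2) - p y) :=
    ((h1.add h2).sub hs).sub h3
  have : (fun x => ((if x = y then p x else 0) + p x * (∑' i, p i ^ 2))
      - p x ^ 2 - p x * p y) = fun x => p x * Kk p x y := by
    funext x; unfold Kk; split <;> ring
  rw [this] at key
  simpa using key

theorem Kint0 (ν : Measure ℕ) [IsProbabilityMeasure ν]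
    (hν : ∀ i, ν {i} = ENNReal.ofReal (p i)) (y : ℕ) :
    ∫ x, Kk p x y ∂ν = 0 := by
  have hint : Integrable (fun x => Kk p x y) ν := by
    refine (integrable_const (4:ℝ)).mono' (measurable_of_countable _).aestronglyMeasurable ?_
    exact Filter.Eventually.of_forall fun x => by
      simpa [Real.norm_eq_abs] using Kabs hp0 hp1 x y
  rw [integral_countable' hint]
  have : (fun x => (ν {x}).toReal • Kk p x y) = fun x => p x * Kk p x y := by
    funext x; rw [hν x, ENNReal.toReal_ofReal (hp0 x)]; simp [smul_eq_mul]
  rw [show (fun x => ν.real {x} • Kk p x y) = fun x => p x * Kk p x y from this]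
  exact (Kdeg hp0 hp1 y).tsum_eq

end KFacts

theorem nat_sum_eq_one {κ : Type*} {s : Finset κ} {g : κ → ℕ} (h : ∑ k ∈ s, g k = 1) :
    ∃ k₀ ∈ s, g k₀ = 1 ∧ ∀ k ∈ s, k ≠ k₀ → g k = 0 := by
  classical
  obtain ⟨k₀, hk₀s, hk₀⟩ := Finset.exists_ne_zero_of_sum_ne_zero (h ▸ one_ne_zero)
  have hsplit : g k₀ + ∑ k ∈ s.erase k₀, g k = 1 := by
    rw [Finset.add_sum_erase s g hk₀s]; exact h
  have h1 : g k₀ = 1 := by omega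
  have h2 : ∑ k ∈ s.erase k₀, g k = 0 := by omega
  refine ⟨k₀, hk₀s, h1, fun k hk hkne => ?_⟩
  have := (Finset.sum_eq_zero_iff.1 h2) k (Finset.mem_erase.2 ⟨hkne, hk⟩)
  exact this


section Vanish
variable {Ω : Type*} [MeasurableSpace Ω] {P : Measure Ω} [IsProbabilityMeasure P]
  {p : ℕ → ℝ} (hp0 : ∀ i, 0 ≤ p i) (hp1 : HasSum p 1)
  {ξ : ℕ → Ω → ℕ} (hmeas : ∀ j, Measurable (ξ j))
  (hindep : iIndepFun ξ P)
  (hlaw : ∀ j i, P {ω | ξ j ω = i} = ENNReal.ofReal (p i))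
include hp0 hp1 hmeas hindep hlaw

theorem vanish {n : ℕ} (f : Fin n → ℕ × ℕ) {m : ℕ}
    (hfE : ∀ k, (f k).1 < m ∧ (f k).2 < m) (j : ℕ) (k₀ : Fin n)
    (h1 : (f k₀).1 = j) (h2 : (f k₀).2 ≠ j)
    (h3 : ∀ k, k ≠ k₀ → (f k).1 ≠ j ∧ (f k).2 ≠ j) :
    ∫ ω, ∏ k, Kk p (ξ (f k).1 ω) (ξ (f k).2 ω) ∂P = 0 := by
  classical
  set Tset : Finset ℕ := (Finset.range m).erase j with hTset
  set X : Ω → ℕ := ξ j with hX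
  set Y : Ω → (Tset → ℕ) := fun ω i => ξ i ω with hY
  have hYmeas : Measurable Y := measurable_pi_lambda _ fun i => hmeas i
  have hjT : j ∉ Tset := Finset.notMem_erase j _
  have hXY : IndepFun X Y P := by
    have h := hindep.indepFun_finset {j} Tset
      (Finset.disjoint_singleton_left.2 hjT) hmeas
    have := h.comp (measurable_pi_apply (⟨j, Finset.mem_singleton_self j⟩ : ({j} : Finset ℕ)))
      measurable_id
    exact this
  -- auxiliary coordinate reader
  set get : (Tset → ℕ) → ℕ → ℕ := fun w i => if h : i ∈ Tset then w ⟨i, h⟩ else 0 with hget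
  have hmemT : ∀ (i : ℕ), i < m → i ≠ j → i ∈ Tset := by
    intro i him hij; exact Finset.mem_erase.2 ⟨hij, Finset.mem_range.2 him⟩
  set H : ℕ × (Tset → ℕ) → ℝ := fun q =>
    Kk p q.1 (get q.2 (f k₀).2) *
      ∏ k ∈ Finset.univ.erase k₀, Kk p (get q.2 (f k).1) (get q.2 (f k).2) with hH
  have hgetY : ∀ ω (i : ℕ), i < m → i ≠ j → get (Y ω) i = ξ i ω := by
    intro ω i him hij
    simp only [hget, dif_pos (hmemT i him hij), hY]
  have hpoint : ∀ ω, (∏ k, Kk p (ξ (f k).1 ω) (ξ (f k).2 ω)) = H (X ω, Y ω) := by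
    intro ω
    rw [← Finset.mul_prod_erase Finset.univ _ (Finset.mem_univ k₀)]
    simp only [hH]
    congr 1
    · rw [h1, hgetY ω (f k₀).2 (hfE k₀).2 h2]
    · refine Finset.prod_congr rfl fun k hk => ?_
      have hk' := h3 k (Finset.mem_erase.1 hk).1
      rw [hgetY ω (f k).1 (hfE k).1 hk'.1, hgetY ω (f k).2 (hfE k).2 hk'.2]
  have hHmeas : Measurable H := measurable_of_countable H
  have hHbound : ∀ q, ‖H q‖ ≤ 4 * 4 ^ n := by
    intro q
    rw [Real.norm_eq_abs, hH, abs_mul]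
    have hb1 : |Kk p q.1 (get q.2 (f k₀).2)| ≤ 4 := Kabs hp0 hp1 _ _
    have hb2 : |∏ k ∈ Finset.univ.erase k₀, Kk p (get q.2 (f k).1) (get q.2 (f k).2)| ≤ 4 ^ n := by
      rw [Finset.abs_prod]
      calc ∏ k ∈ Finset.univ.erase k₀, |Kk p (get q.2 (f k).1) (get q.2 (f k).2)|
          ≤ ∏ _k ∈ Finset.univ.erase k₀, (4:ℝ) :=
            Finset.prod_le_prod (fun _ _ => abs_nonneg _) (fun k _ => Kabs hp0 hp1 _ _)
        _ = 4 ^ (Finset.univ.erase k₀).card := by rw [Finset.prod_const]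
        _ ≤ 4 ^ n := by
            apply pow_le_pow_right₀ (by norm_num)
            calc (Finset.univ.erase k₀).card ≤ Finset.univ.card := Finset.card_erase_le
              _ = n := by simp
    exact mul_le_mul hb1 hb2 (abs_nonneg _) (by norm_num)
  have hXmeas : Measurable X := hmeas j
  have hmapX : ∀ i, (P.map X) {i} = ENNReal.ofReal (p i) := by
    intro i
    rw [Measure.map_apply hXmeas (measurableSet_singleton i)]
    have : X ⁻¹' {i} = {ω | ξ j ω = i} := by ext ω; simp [hX]
    rw [this, hlaw j i]
  haveI : IsProbabilityMeasure (P.map X) := Measure.isProbabilityMeasure_map hXmeas.aemeasurable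
  haveI : IsProbabilityMeasure (P.map Y) := Measure.isProbabilityMeasure_map hYmeas.aemeasurable
  have hmap : P.map (fun ω => (X ω, Y ω)) = (P.map X).prod (P.map Y) :=
    (indepFun_iff_map_prod_eq_prod_map_map hXmeas.aemeasurable hYmeas.aemeasurable).1 hXY
  have hint : Integrable H ((P.map X).prod (P.map Y)) := by
    refine (integrable_const (4 * 4 ^ n : ℝ)).mono' hHmeas.aestronglyMeasurable ?_
    exact Filter.Eventually.of_forall hHbound
  calc ∫ ω, ∏ k, Kk p (ξ (f k).1 ω) (ξ (f k).2 ω) ∂P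
      = ∫ ω, H (X ω, Y ω) ∂P := by simp only [hpoint]
    _ = ∫ q, H q ∂(P.map (fun ω => (X ω, Y ω))) :=
        (integral_map (hXmeas.prodMk hYmeas).aemeasurable hHmeas.aestronglyMeasurable).symm
    _ = ∫ q, H q ∂((P.map X).prod (P.map Y)) := by rw [hmap]
    _ = ∫ y, ∫ x, H (x, y) ∂(P.map X) ∂(P.map Y) := integral_prod_symm H hint
    _ = 0 := by
        rw [← integral_zero (Tset → ℕ) ℝ (μ := P.map Y)]
        congr 1
        funext y
        have : ∫ x, H (x, y) ∂(P.map X) =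
            (∫ x, Kk p x (get y (f k₀).2) ∂(P.map X)) *
            ∏ k ∈ Finset.univ.erase k₀, Kk p (get y (f k).1) (get y (f k).2) := by
          rw [← integral_mul_const]
        rw [this, Kint0 hp0 hp1 (P.map X) hmapX, zero_mul]

end Vanish

theorem count_good {n m : ℕ} (hn : 0 < n) (G : Finset (Fin n → ℕ × ℕ))
    (hG : ∀ f ∈ G, f ∈ (Fintype.piFinset fun _ : Fin n => (Finset.range m ×ˢ Finset.range m))
      ∧ ∀ j, deg f j ≠ 1) :
    G.card ≤ n ^ (2 * n) * m ^ n := by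
  classical
  set F := (Fintype.piFinset fun _ : Fin n => (Finset.univ : Finset (Fin n × Fin n))) ×ˢ
    (Fintype.piFinset fun _ : Fin n => Finset.range m) with hF
  set recon : ((Fin n → Fin n × Fin n) × (Fin n → ℕ)) → (Fin n → ℕ × ℕ) :=
    fun ge k => (ge.2 (ge.1 k).1, ge.2 (ge.1 k).2) with hrecon
  have hsub : G ⊆ F.image recon := by
    intro f hf
    obtain ⟨hfp, hfdeg⟩ := hG f hf
    have hfm : ∀ k, (f k).1 < m ∧ (f k).2 < m := by
      intro k
      have := Fintype.mem_piFinset.1 hfp k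
      rw [Finset.mem_product] at this
      exact ⟨Finset.mem_range.1 this.1, Finset.mem_range.1 this.2⟩
    set V : Finset ℕ := (Finset.univ.image fun k => (f k).1) ∪
      (Finset.univ.image fun k => (f k).2) with hV
    have hVm : ∀ x ∈ V, x < m := by
      intro x hx
      rw [hV, Finset.mem_union] at hx
      rcases hx with hx | hx <;> obtain ⟨k, _, rfl⟩ := Finset.mem_image.1 hx
      · exact (hfm k).1
      · exact (hfm k).2
    have hslot1 : ∀ k, (f k).1 ∈ V := fun k =>
      Finset.mem_union_left _ (Finset.mem_image.2 ⟨k, Finset.mem_univ k, rfl⟩)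
    have hslot2 : ∀ k, (f k).2 ∈ V := fun k =>
      Finset.mem_union_right _ (Finset.mem_image.2 ⟨k, Finset.mem_univ k, rfl⟩)
    have hdeg2 : ∀ j ∈ V, 2 ≤ deg f j := by
      intro j hj
      have h1 : 1 ≤ deg f j := by
        rw [hV, Finset.mem_union] at hj
        rcases hj with hj | hj <;> obtain ⟨k, _, hk⟩ := Finset.mem_image.1 hj
        · calc 1 ≤ (if (f k).1 = j then 1 else 0) + (if (f k).2 = j then 1 else 0) := by
                rw [if_pos hk]; omega
            _ ≤ deg f j := Finset.single_le_sum (f := fun k =>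
                (if (f k).1 = j then 1 else 0) + (if (f k).2 = j then 1 else 0))
                (fun _ _ => Nat.zero_le _) (Finset.mem_univ k)
        · calc 1 ≤ (if (f k).1 = j then 1 else 0) + (if (f k).2 = j then 1 else 0) := by
                rw [if_pos hk]; omega
            _ ≤ deg f j := Finset.single_le_sum (f := fun k =>
                (if (f k).1 = j then 1 else 0) + (if (f k).2 = j then 1 else 0))
                (fun _ _ => Nat.zero_le _) (Finset.mem_univ k)
      have := hfdeg j; omega
    have hsumdeg : ∑ j ∈ V, deg f j = 2 * n := by
      unfold deg
      rw [Finset.sum_comm]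
      have : ∀ k : Fin n, ∑ j ∈ V, ((if (f k).1 = j then 1 else 0) +
          (if (f k).2 = j then 1 else 0)) = 2 := by
        intro k
        rw [Finset.sum_add_distrib, Finset.sum_ite_eq V ((f k).1) (fun _ => 1),
          Finset.sum_ite_eq V ((f k).2) (fun _ => 1),
          if_pos (hslot1 k), if_pos (hslot2 k)]
      rw [Finset.sum_congr rfl fun k _ => this k]
      simp [mul_comm]
    have hVcard : V.card ≤ n := by
      have := Finset.card_nsmul_le_sum V (deg f) 2 hdeg2
      rw [hsumdeg] at this
      simp only [smul_eq_mul] at this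
      omega
    have hVne : (f ⟨0, hn⟩).1 ∈ V := hslot1 _
    set l := V.toList with hl
    have hlen : l.length = V.card := Finset.length_toList V
    set e : Fin n → ℕ := fun i => l.getD i (f ⟨0, hn⟩).1 with he
    have he1 : ∀ i, e i ∈ Finset.range m := by
      intro i
      rw [Finset.mem_range]
      show l.getD i (f ⟨0, hn⟩).1 < m
      by_cases h : (i : ℕ) < l.length
      · rw [List.getD_eq_getElem l _ h]
        exact hVm _ (Finset.mem_toList.1 (List.getElem_mem h))
      · rw [List.getD_eq_default l _ (Nat.le_of_not_lt h)]
        exact hVm _ hVne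
    have he2 : ∀ x ∈ V, ∃ i : Fin n, e i = x := by
      intro x hx
      obtain ⟨i, hi, hix⟩ := List.mem_iff_getElem.1 (Finset.mem_toList.2 hx)
      have hin : i < n := lt_of_lt_of_le (hlen ▸ hi) hVcard
      exact ⟨⟨i, hin⟩, by rw [he]; simp only; rw [List.getD_eq_getElem l _ hi]; exact hix⟩
    set g : Fin n → Fin n × Fin n := fun k =>
      ((he2 (f k).1 (hslot1 k)).choose, (he2 (f k).2 (hslot2 k)).choose) with hg
    refine Finset.mem_image.2 ⟨(g, e), ?_, ?_⟩
    · rw [hF, Finset.mem_product]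
      exact ⟨Fintype.mem_piFinset.2 fun k => Finset.mem_univ _,
        Fintype.mem_piFinset.2 fun k => he1 k⟩
    · funext k
      rw [hrecon]
      simp only [hg]
      rw [(he2 (f k).1 (hslot1 k)).choose_spec, (he2 (f k).2 (hslot2 k)).choose_spec]
  calc G.card
      ≤ (F.image recon).card := Finset.card_le_card hsub
    _ ≤ F.card := Finset.card_image_le
    _ = n ^ (2 * n) * m ^ n := by
        rw [hF, Finset.card_product, Fintype.card_piFinset, Fintype.card_piFinset]
        simp only [Finset.card_univ, Fintype.card_prod, Fintype.card_fin,
          Finset.card_range, Finset.prod_const]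
        ring

section Ident
variable {p : ℕ → ℝ} (hp0 : ∀ i, 0 ≤ p i) (hp1 : HasSum p 1)
include hp0 hp1

theorem tsum_identity (v : ℕ → ℕ) {m : ℕ} (hm : 0 < m) :
    ∑' i, ((1 / (m : ℝ)) * ∑ j ∈ Finset.range m,
        (if v j = i then (1 : ℝ) else 0) - p i) ^ 2
      = (∑ q ∈ Finset.range m ×ˢ Finset.range m, Kk p (v q.1) (v q.2)) / (m : ℝ) ^ 2 := by
  classical
  have hmR : (m : ℝ) ≠ 0 := Nat.cast_ne_zero.2 hm.ne'
  set s : ℝ := ∑' i, p i ^ 2 with hs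
  set c : ℕ → ℝ := fun i => ∑ j ∈ Finset.range m, (if v j = i then (1 : ℝ) else 0) with hc
  set F : Finset ℕ := (Finset.range m).image v with hF
  have hvF : ∀ j ∈ Finset.range m, v j ∈ F := fun j hj => Finset.mem_image.2 ⟨j, hj, rfl⟩
  have hcF : ∀ i, i ∉ F → c i = 0 := by
    intro i hi
    refine Finset.sum_eq_zero fun j hj => ?_
    rw [if_neg]
    intro h
    exact hi (h ▸ hvF j hj)
  set P : ℝ := ∑ j ∈ Finset.range m, p (v j) with hP
  set S1 : ℝ := ∑ j ∈ Finset.range m, ∑ j' ∈ Finset.range m,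
    (if v j = v j' then (1 : ℝ) else 0) with hS1
  -- sum of c i ^ 2 over F
  have h5 : ∑ i ∈ F, c i ^ 2 = S1 := by
    have inner : ∀ j ∈ Finset.range m, ∀ j' ∈ Finset.range m,
        ∑ i ∈ F, (if v j = i then (1:ℝ) else 0) * (if v j' = i then (1:ℝ) else 0)
          = (if v j = v j' then (1:ℝ) else 0) := by
      intro j hj j' hj'
      have : ∀ i, (if v j = i then (1:ℝ) else 0) * (if v j' = i then (1:ℝ) else 0)
          = (if v j = i then (if v j' = i then (1:ℝ) else 0) else 0) := by
        intro i; split_ifs <;> ring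
      rw [Finset.sum_congr rfl fun i _ => this i,
        Finset.sum_ite_eq F (v j) (fun i => if v j' = i then (1:ℝ) else 0),
        if_pos (hvF j hj)]
      exact if_congr eq_comm rfl rfl
    calc ∑ i ∈ F, c i ^ 2
        = ∑ i ∈ F, ∑ j ∈ Finset.range m, ∑ j' ∈ Finset.range m,
            (if v j = i then (1:ℝ) else 0) * (if v j' = i then (1:ℝ) else 0) := by
          refine Finset.sum_congr rfl fun i _ => ?_
          rw [hc, pow_two, Finset.sum_mul_sum]
      _ = ∑ j ∈ Finset.range m, ∑ i ∈ F, ∑ j' ∈ Finset.range m,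
            (if v j = i then (1:ℝ) else 0) * (if v j' = i then (1:ℝ) else 0) :=
          Finset.sum_comm
      _ = ∑ j ∈ Finset.range m, ∑ j' ∈ Finset.range m, ∑ i ∈ F,
            (if v j = i then (1:ℝ) else 0) * (if v j' = i then (1:ℝ) else 0) :=
          Finset.sum_congr rfl fun j _ => Finset.sum_comm
      _ = S1 := by
          rw [hS1]
          refine Finset.sum_congr rfl fun j hj => Finset.sum_congr rfl fun j' hj' => ?_
          exact inner j hj j' hj'
  -- sum of p i * c i over F
  have h6 : ∑ i ∈ F, p i * c i = P := by
    calc ∑ i ∈ F, p i * c i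
        = ∑ i ∈ F, ∑ j ∈ Finset.range m, (if v j = i then p i else 0) := by
          refine Finset.sum_congr rfl fun i _ => ?_
          rw [hc, Finset.mul_sum]
          exact Finset.sum_congr rfl fun j _ => by split_ifs <;> ring
      _ = ∑ j ∈ Finset.range m, ∑ i ∈ F, (if v j = i then p i else 0) := Finset.sum_comm
      _ = P := by
          rw [hP]
          refine Finset.sum_congr rfl fun j hj => ?_
          rw [Finset.sum_ite_eq F (v j) p, if_pos (hvF j hj)]
  -- expansion of T
  have hTeq : (∑ q ∈ Finset.range m ×ˢ Finset.range m, Kk p (v q.1) (v q.2))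
      = S1 - 2 * (m : ℝ) * P + (m : ℝ) ^ 2 * s := by
    rw [Finset.sum_product]
    have : ∀ j ∈ Finset.range m, ∑ j' ∈ Finset.range m, Kk p (v j) (v j')
        = (∑ j' ∈ Finset.range m, (if v j = v j' then (1:ℝ) else 0))
          - (m : ℝ) * p (v j) - P + (m : ℝ) * s := by
      intro j hj
      unfold Kk
      rw [Finset.sum_add_distrib, Finset.sum_sub_distrib, Finset.sum_sub_distrib,
        Finset.sum_const, Finset.sum_const, Finset.card_range, nsmul_eq_mul, nsmul_eq_mul]
    rw [Finset.sum_congr rfl this, Finset.sum_add_distrib, Finset.sum_sub_distrib,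
      Finset.sum_sub_distrib, Finset.sum_const, Finset.sum_const, Finset.card_range,
      nsmul_eq_mul, nsmul_eq_mul, ← hS1, ← Finset.mul_sum, ← hP]
    ring
  -- HasSum computations
  have hsq : HasSum (fun i => p i ^ 2) s := (hsq_summable hp0 hp1).hasSum
  have hA : HasSum (fun i => c i ^ 2 - 2 * (m : ℝ) * (p i * c i))
      (∑ i ∈ F, (c i ^ 2 - 2 * (m : ℝ) * (p i * c i))) := by
    refine hasSum_sum_of_ne_finset_zero fun i hi => ?_
    rw [hcF i hi]; ring
  have hB : HasSum (fun i => (m : ℝ) ^ 2 * p i ^ 2) ((m : ℝ) ^ 2 * s) := hsq.mul_left _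
  have hD : HasSum (fun i => (c i - (m : ℝ) * p i) ^ 2)
      ((∑ i ∈ F, (c i ^ 2 - 2 * (m : ℝ) * (p i * c i))) + (m : ℝ) ^ 2 * s) := by
    have := hA.add hB
    convert this using 1
    funext i; ring
  have hDval : (∑ i ∈ F, (c i ^ 2 - 2 * (m : ℝ) * (p i * c i))) + (m : ℝ) ^ 2 * s
      = ∑ q ∈ Finset.range m ×ˢ Finset.range m, Kk p (v q.1) (v q.2) := by
    rw [Finset.sum_sub_distrib, ← Finset.mul_sum, h5, h6, hTeq]
  have hLHS : ∀ i, ((1 / (m : ℝ)) * c i - p i) ^ 2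
      = (1 / (m : ℝ)) ^ 2 * (c i - (m : ℝ) * p i) ^ 2 := by
    intro i
    field_simp
  calc ∑' i, ((1 / (m : ℝ)) * c i - p i) ^ 2
      = ∑' i, (1 / (m : ℝ)) ^ 2 * (c i - (m : ℝ) * p i) ^ 2 := by
        exact tsum_congr hLHS
    _ = (1 / (m : ℝ)) ^ 2 * ((∑ i ∈ F, (c i ^ 2 - 2 * (m : ℝ) * (p i * c i)))
          + (m : ℝ) ^ 2 * s) := (hD.mul_left _).tsum_eq
    _ = (∑ q ∈ Finset.range m ×ˢ Finset.range m, Kk p (v q.1) (v q.2)) / (m : ℝ) ^ 2 := by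
        rw [hDval]
        field_simp

theorem T_nonneg (v : ℕ → ℕ) (m : ℕ) :
    0 ≤ ∑ q ∈ Finset.range m ×ˢ Finset.range m, Kk p (v q.1) (v q.2) := by
  rcases Nat.eq_zero_or_pos m with rfl | hm
  · simp
  · have h := tsum_identity hp0 hp1 v hm
    set T := ∑ q ∈ Finset.range m ×ˢ Finset.range m, Kk p (v q.1) (v q.2) with hT
    have h0 : 0 ≤ T / (m : ℝ) ^ 2 := by
      rw [← h]; exact tsum_nonneg fun i => sq_nonneg _
    have hm2 : (0:ℝ) < (m : ℝ) ^ 2 := by positivity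
    have h1 := mul_nonneg h0 hm2.le
    rwa [div_mul_cancel₀ _ hm2.ne'] at h1
end Ident

section Moment
variable {Ω : Type*} [MeasurableSpace Ω] {P : Measure Ω} [IsProbabilityMeasure P]
  {p : ℕ → ℝ} (hp0 : ∀ i, 0 ≤ p i) (hp1 : HasSum p 1)
  {ξ : ℕ → Ω → ℕ} (hmeas : ∀ j, Measurable (ξ j))
  (hindep : iIndepFun ξ P)
  (hlaw : ∀ j i, P {ω | ξ j ω = i} = ENNReal.ofReal (p i))
include hp0 hp1 hmeas hindep hlaw

theorem moment_bound {n : ℕ} (hn : 0 < n) (m : ℕ) :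
    ∫ ω, (∑ q ∈ Finset.range m ×ˢ Finset.range m, Kk p (ξ q.1 ω) (ξ q.2 ω)) ^ n ∂P
      ≤ (4 ^ n * n ^ (2 * n) : ℝ) * m ^ n := by
  classical
  set E : Finset (ℕ × ℕ) := Finset.range m ×ˢ Finset.range m with hE
  have hKmeas : ∀ q : ℕ × ℕ, Measurable fun ω => Kk p (ξ q.1 ω) (ξ q.2 ω) := fun q =>
    (measurable_of_countable (fun z : ℕ × ℕ => Kk p z.1 z.2)).comp
      ((hmeas q.1).prodMk (hmeas q.2))
  have hexp : ∀ ω, (∑ q ∈ E, Kk p (ξ q.1 ω) (ξ q.2 ω)) ^ n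
      = ∑ f ∈ Fintype.piFinset (fun _ : Fin n => E),
          ∏ k, Kk p (ξ (f k).1 ω) (ξ (f k).2 ω) := by
    intro ω
    calc (∑ q ∈ E, Kk p (ξ q.1 ω) (ξ q.2 ω)) ^ n
        = ∏ _k : Fin n, ∑ q ∈ E, Kk p (ξ q.1 ω) (ξ q.2 ω) := by
          rw [Finset.prod_const, Finset.card_univ, Fintype.card_fin]
      _ = _ := Finset.prod_univ_sum _ _
  have hprodmeas : ∀ f : Fin n → ℕ × ℕ,
      Measurable fun ω => ∏ k, Kk p (ξ (f k).1 ω) (ξ (f k).2 ω) :=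
    fun f => Finset.measurable_prod _ fun k _ => hKmeas (f k)
  have hprodbound : ∀ (f : Fin n → ℕ × ℕ) ω,
      ‖∏ k, Kk p (ξ (f k).1 ω) (ξ (f k).2 ω)‖ ≤ 4 ^ n := by
    intro f ω
    rw [Real.norm_eq_abs, Finset.abs_prod]
    calc ∏ k, |Kk p (ξ (f k).1 ω) (ξ (f k).2 ω)| ≤ ∏ _k : Fin n, (4:ℝ) :=
        Finset.prod_le_prod (fun _ _ => abs_nonneg _) (fun k _ => Kabs hp0 hp1 _ _)
      _ = 4 ^ n := by rw [Finset.prod_const, Finset.card_univ, Fintype.card_fin]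
  have hprodint : ∀ f : Fin n → ℕ × ℕ,
      Integrable (fun ω => ∏ k, Kk p (ξ (f k).1 ω) (ξ (f k).2 ω)) P := by
    intro f
    exact (integrable_const ((4:ℝ) ^ n)).mono' (hprodmeas f).aestronglyMeasurable
      (Filter.Eventually.of_forall (hprodbound f))
  have hswap : ∫ ω, (∑ q ∈ E, Kk p (ξ q.1 ω) (ξ q.2 ω)) ^ n ∂P
      = ∑ f ∈ Fintype.piFinset (fun _ : Fin n => E),
          ∫ ω, ∏ k, Kk p (ξ (f k).1 ω) (ξ (f k).2 ω) ∂P := by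
    rw [integral_congr_ae (Filter.Eventually.of_forall hexp)]
    exact integral_finset_sum _ fun f _ => hprodint f
  set I : (Fin n → ℕ × ℕ) → ℝ := fun f => ∫ ω, ∏ k, Kk p (ξ (f k).1 ω) (ξ (f k).2 ω) ∂P
    with hI
  set Good : Finset (Fin n → ℕ × ℕ) :=
    (Fintype.piFinset (fun _ : Fin n => E)).filter (fun f => ∀ j, deg f j ≠ 1) with hGood
  -- bad terms vanish
  have hbad : ∀ f ∈ (Fintype.piFinset (fun _ : Fin n => E)).filter
      (fun f => ¬ ∀ j, deg f j ≠ 1), I f = 0 := by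
    intro f hf
    rw [Finset.mem_filter] at hf
    obtain ⟨hfp, hfbad⟩ := hf
    push_neg at hfbad
    obtain ⟨j, hj⟩ := hfbad
    have hfm : ∀ k, (f k).1 < m ∧ (f k).2 < m := by
      intro k
      have := Fintype.mem_piFinset.1 hfp k
      rw [hE, Finset.mem_product] at this
      exact ⟨Finset.mem_range.1 this.1, Finset.mem_range.1 this.2⟩
    obtain ⟨k₀, _, hk₀, hother⟩ := nat_sum_eq_one (s := Finset.univ)
      (g := fun k => (if (f k).1 = j then 1 else 0) + (if (f k).2 = j then 1 else 0)) hj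
    have hoth : ∀ k, k ≠ k₀ → (f k).1 ≠ j ∧ (f k).2 ≠ j := by
      intro k hk
      have := hother k (Finset.mem_univ k) hk
      constructor <;> intro hcon <;> rw [hcon] at this <;> simp at this
    by_cases hc1 : (f k₀).1 = j
    · have hc2 : (f k₀).2 ≠ j := by
        intro hcon
        rw [if_pos hc1, if_pos hcon] at hk₀
        omega
      exact vanish hp0 hp1 hmeas hindep hlaw f hfm j k₀ hc1 hc2 hoth
    · have hc2 : (f k₀).2 = j := by
        by_contra hcon
        rw [if_neg hc1, if_neg hcon] at hk₀
        omega
      set f' : Fin n → ℕ × ℕ := Function.update f k₀ ((f k₀).2, (f k₀).1) with hf'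
      have hI' : I f = I f' := by
        rw [hI]
        refine integral_congr_ae (Filter.Eventually.of_forall fun ω => ?_)
        refine Finset.prod_congr rfl fun k _ => ?_
        by_cases hk : k = k₀
        · subst hk
          rw [hf', Function.update_self]
          exact Ksymm _ _
        · rw [hf', Function.update_of_ne hk]
      rw [hI']
      have hfm' : ∀ k, (f' k).1 < m ∧ (f' k).2 < m := by
        intro k
        by_cases hk : k = k₀
        · subst hk; rw [hf', Function.update_self]
          exact ⟨(hfm _).2, (hfm _).1⟩
        · rw [hf', Function.update_of_ne hk]; exact hfm k
      have h1' : (f' k₀).1 = j := by rw [hf', Function.update_self]; exact hc2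
      have h2' : (f' k₀).2 ≠ j := by rw [hf', Function.update_self]; exact hc1
      have h3' : ∀ k, k ≠ k₀ → (f' k).1 ≠ j ∧ (f' k).2 ≠ j := by
        intro k hk
        rw [hf', Function.update_of_ne hk]
        exact hoth k hk
      exact vanish hp0 hp1 hmeas hindep hlaw f' hfm' j k₀ h1' h2' h3'
  have hIbound : ∀ f, |I f| ≤ 4 ^ n := by
    intro f
    rw [hI]
    have := norm_integral_le_of_norm_le_const (μ := P)
      (f := fun ω => ∏ k, Kk p (ξ (f k).1 ω) (ξ (f k).2 ω)) (C := 4 ^ n)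
      (Filter.Eventually.of_forall (hprodbound f))
    simpa [Real.norm_eq_abs] using this
  calc ∫ ω, (∑ q ∈ E, Kk p (ξ q.1 ω) (ξ q.2 ω)) ^ n ∂P
      = ∑ f ∈ Fintype.piFinset (fun _ : Fin n => E), I f := hswap
    _ = ∑ f ∈ Good, I f + ∑ f ∈ (Fintype.piFinset (fun _ : Fin n => E)).filter
          (fun f => ¬ ∀ j, deg f j ≠ 1), I f :=
        (Finset.sum_filter_add_sum_filter_not _ _ _).symm
    _ = ∑ f ∈ Good, I f := by rw [Finset.sum_eq_zero hbad, add_zero]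
    _ ≤ |∑ f ∈ Good, I f| := le_abs_self _
    _ ≤ ∑ f ∈ Good, |I f| := Finset.abs_sum_le_sum_abs _ _
    _ ≤ ∑ _f ∈ Good, (4:ℝ) ^ n := Finset.sum_le_sum fun f _ => hIbound f
    _ = Good.card * 4 ^ n := by rw [Finset.sum_const, nsmul_eq_mul]
    _ ≤ (↑(n ^ (2 * n) * m ^ n) : ℝ) * 4 ^ n := by
        have hcount := count_good hn Good (fun f hf => by
          rw [hGood, Finset.mem_filter] at hf
          exact ⟨by rw [← hE]; exact hf.1, hf.2⟩)
        have : (Good.card : ℝ) ≤ ((n ^ (2 * n) * m ^ n : ℕ) : ℝ) := by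
          exact_mod_cast hcount
        exact mul_le_mul_of_nonneg_right this (by positivity)
    _ = (4 ^ n * n ^ (2 * n) : ℝ) * m ^ n := by
        push_cast
        ring
end Moment

end Stmt17Aux

open Stmt17Aux

/-- Let `p` be a probability vector on `ℕ`, `(ξ_j)` i.i.d. `ℕ`-valued random
variables with `P(ξ_j = i) = p_i`, and `(a(m))` positive reals with
`∑_m a(m)^{2n} < ∞` for some `n ≥ 1`. Then, almost surely,
`a(m)√m · (∑_i (μ_i^m − p_i)²)^{1/2} → 0`, where
`μ_i^m = (1/m) ∑_{j<m} 1{ξ_j = i}`. -/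
theorem stmt17 (Ω : Type*) [MeasurableSpace Ω] (P : Measure Ω)
    [IsProbabilityMeasure P]
    (p : ℕ → ℝ) (hp0 : ∀ i, 0 ≤ p i) (hp1 : HasSum p 1)
    (ξ : ℕ → Ω → ℕ) (hmeas : ∀ j, Measurable (ξ j))
    (hindep : iIndepFun ξ P)
    (hlaw : ∀ j i, P {ω | ξ j ω = i} = ENNReal.ofReal (p i))
    (a : ℕ → ℝ) (ha : ∀ m, 0 < a m)
    (n : ℕ) (hn : 0 < n) (hsum : Summable fun m => a m ^ (2 * n)) :
    ∀ᵐ ω ∂P, Filter.Tendsto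
      (fun m : ℕ => a m * Real.sqrt m *
        Real.sqrt (∑' i, ((1 / (m : ℝ)) * ∑ j ∈ Finset.range m,
          (if ξ j ω = i then (1 : ℝ) else 0) - p i) ^ 2))
      Filter.atTop (nhds 0) := by
  classical
  set T : ℕ → Ω → ℝ :=
    fun m ω => ∑ q ∈ Finset.range m ×ˢ Finset.range m, Kk p (ξ q.1 ω) (ξ q.2 ω) with hT
  have hTmeas : ∀ m, Measurable (T m) := by
    intro m
    exact Finset.measurable_sum _ fun q _ =>
      (measurable_of_countable (fun z : ℕ × ℕ => Kk p z.1 z.2)).comp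
        ((hmeas q.1).prodMk (hmeas q.2))
  have hTnonneg : ∀ m ω, 0 ≤ T m ω := fun m ω => T_nonneg hp0 hp1 (fun j => ξ j ω) m
  have hTabs : ∀ m ω, |T m ω| ≤ 4 * (m : ℝ) ^ 2 := by
    intro m ω
    calc |T m ω| ≤ ∑ q ∈ Finset.range m ×ˢ Finset.range m, |Kk p (ξ q.1 ω) (ξ q.2 ω)| :=
        Finset.abs_sum_le_sum_abs _ _
      _ ≤ ∑ _q ∈ Finset.range m ×ˢ Finset.range m, (4:ℝ) :=
        Finset.sum_le_sum fun q _ => Kabs hp0 hp1 _ _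
      _ = ((m * m : ℕ) : ℝ) * 4 := by
          rw [Finset.sum_const, Finset.card_product, Finset.card_range, nsmul_eq_mul]
      _ = 4 * (m : ℝ) ^ 2 := by push_cast; ring
  have hTn_int : ∀ m, Integrable (fun ω => (T m ω) ^ n) P := by
    intro m
    refine (integrable_const ((4 * (m:ℝ)^2) ^ n)).mono'
      ((hTmeas m).pow_const n).aestronglyMeasurable ?_
    refine Filter.Eventually.of_forall fun ω => ?_
    rw [Real.norm_eq_abs, abs_pow]
    exact pow_le_pow_left₀ (abs_nonneg _) (hTabs m ω) n
  set C : ℝ := 4 ^ n * n ^ (2 * n) with hC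
  have hC0 : 0 ≤ C := by positivity
  have hmom : ∀ m, ∫ ω, (T m ω) ^ n ∂P ≤ C * m ^ n := fun m =>
    moment_bound hp0 hp1 hmeas hindep hlaw hn m
  set g : ℕ → Ω → ENNReal :=
    fun m ω => ENNReal.ofReal (a m ^ (2 * n) * (T m ω) ^ n / (m : ℝ) ^ n) with hg
  have hgmeas : ∀ m, Measurable (g m) := by
    intro m
    exact ((((hTmeas m).pow_const n).const_mul _).div_const _).ennreal_ofReal
  have hgbound : ∀ m, ∫⁻ ω, g m ω ∂P ≤ ENNReal.ofReal (C * a m ^ (2 * n)) := by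
    intro m
    rcases Nat.eq_zero_or_pos m with rfl | hm
    · have : ∀ ω, g 0 ω = 0 := by
        intro ω
        simp [hg, hn.ne']
      simp only [this, lintegral_const, zero_mul]
      exact zero_le
    have hmn : (0:ℝ) < (m : ℝ) ^ n := by positivity
    have hfact : ∀ ω, g m ω =
        ENNReal.ofReal (a m ^ (2 * n) / (m : ℝ) ^ n) * ENNReal.ofReal ((T m ω) ^ n) := by
      intro ω
      simp only [hg]
      rw [← ENNReal.ofReal_mul (div_nonneg (pow_nonneg (ha m).le _)
        (pow_nonneg (Nat.cast_nonneg m) _))]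
      congr 1
      ring
    calc ∫⁻ ω, g m ω ∂P
        = ENNReal.ofReal (a m ^ (2 * n) / (m : ℝ) ^ n) * ∫⁻ ω, ENNReal.ofReal ((T m ω) ^ n) ∂P := by
          simp only [hfact]
          rw [lintegral_const_mul _ ((hTmeas m).pow_const n).ennreal_ofReal]
      _ = ENNReal.ofReal (a m ^ (2 * n) / (m : ℝ) ^ n) * ENNReal.ofReal (∫ ω, (T m ω) ^ n ∂P) := by
          rw [← ofReal_integral_eq_lintegral_ofReal (hTn_int m)
            (Filter.Eventually.of_forall fun ω => pow_nonneg (hTnonneg m ω) n)]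
      _ ≤ ENNReal.ofReal (a m ^ (2 * n) / (m : ℝ) ^ n) * ENNReal.ofReal (C * m ^ n) :=
          mul_le_mul_right (ENNReal.ofReal_le_ofReal (hmom m)) _
      _ = ENNReal.ofReal (a m ^ (2 * n) / (m : ℝ) ^ n * (C * m ^ n)) :=
          (ENNReal.ofReal_mul (div_nonneg (pow_nonneg (ha m).le _)
            (pow_nonneg (Nat.cast_nonneg m) _))).symm
      _ = ENNReal.ofReal (C * a m ^ (2 * n)) := by
          congr 1
          field_simp
  have hsum2 : Summable fun m => C * a m ^ (2 * n) := hsum.mul_left C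
  have hfin : ∑' m, ∫⁻ ω, g m ω ∂P ≠ ⊤ := by
    refine ne_top_of_le_ne_top ?_ (ENNReal.tsum_le_tsum hgbound)
    rw [← ENNReal.ofReal_tsum_of_nonneg
      (fun m => mul_nonneg hC0 (pow_nonneg (ha m).le _)) hsum2]
    exact ENNReal.ofReal_ne_top
  have hlint : ∫⁻ ω, ∑' m, g m ω ∂P ≠ ⊤ := by
    rw [lintegral_tsum fun m => (hgmeas m).aemeasurable]
    exact hfin
  have hae : ∀ᵐ ω ∂P, ∑' m, g m ω < ⊤ :=
    ae_lt_top (Measurable.ennreal_tsum hgmeas) hlint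
  filter_upwards [hae] with ω hω
  -- real summability
  have hsummable : Summable fun m => a m ^ (2 * n) * (T m ω) ^ n / (m : ℝ) ^ n := by
    have h1 := ENNReal.summable_toReal hω.ne
    refine h1.congr fun m => ?_
    rw [hg]
    exact ENNReal.toReal_ofReal (div_nonneg (mul_nonneg (pow_nonneg (ha m).le _)
      (pow_nonneg (hTnonneg m ω) _)) (pow_nonneg (Nat.cast_nonneg m) _))
  set w : ℕ → ℝ := fun m => a m ^ 2 * T m ω / m with hw
  have hw0 : ∀ m, 0 ≤ w m := by
    intro m
    exact div_nonneg (mul_nonneg (sq_nonneg _) (hTnonneg m ω)) (Nat.cast_nonneg m)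
  have hwn : ∀ m, w m ^ n = a m ^ (2 * n) * (T m ω) ^ n / (m : ℝ) ^ n := by
    intro m
    rw [hw]
    rw [div_pow, mul_pow, ← pow_mul]
  have hwn0 : Filter.Tendsto (fun m => w m ^ n) Filter.atTop (nhds 0) := by
    refine Summable.tendsto_atTop_zero ?_
    exact (summable_congr fun m => (hwn m).symm).1 hsummable
  have hwt : Filter.Tendsto w Filter.atTop (nhds 0) := by
    refine Metric.tendsto_atTop.2 fun ε hε => ?_
    obtain ⟨N, hN⟩ := Metric.tendsto_atTop.1 hwn0 (ε ^ n) (pow_pos hε n)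
    refine ⟨N, fun m hm => ?_⟩
    have h1 := hN m hm
    rw [Real.dist_eq, sub_zero] at h1 ⊢
    rw [abs_of_nonneg (hw0 m)]
    rw [abs_of_nonneg (pow_nonneg (hw0 m) n)] at h1
    exact lt_of_pow_lt_pow_left₀ n hε.le h1
  have hsq : Filter.Tendsto (fun m => Real.sqrt (w m)) Filter.atTop (nhds 0) := by
    have := (Real.continuous_sqrt.tendsto 0).comp hwt
    simpa [Function.comp_def] using this
  refine hsq.congr' ?_
  rw [Filter.EventuallyEq, Filter.eventually_atTop]
  refine ⟨1, fun m hm => ?_⟩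
  have hm0 : 0 < m := hm
  have hid := tsum_identity hp0 hp1 (fun j => ξ j ω) hm0
  set Sm : ℝ := ∑' i, ((1 / (m : ℝ)) * ∑ j ∈ Finset.range m,
    (if ξ j ω = i then (1 : ℝ) else 0) - p i) ^ 2 with hSm
  have hSm0 : 0 ≤ Sm := tsum_nonneg fun i => sq_nonneg _
  have hterm0 : 0 ≤ a m * Real.sqrt m * Real.sqrt Sm := by
    have := (ha m).le
    positivity
  have hsq2 : (a m * Real.sqrt m * Real.sqrt Sm) ^ 2 = w m := by
    rw [mul_pow, mul_pow, Real.sq_sqrt hSm0, Real.sq_sqrt (Nat.cast_nonneg m)]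
    rw [hid]
    have hmR : (m : ℝ) ≠ 0 := Nat.cast_ne_zero.2 hm0.ne'
    show a m ^ 2 * (m:ℝ) * ((∑ q ∈ Finset.range m ×ˢ Finset.range m,
        Kk p (ξ q.1 ω) (ξ q.2 ω)) / (m:ℝ) ^ 2)
      = a m ^ 2 * (∑ q ∈ Finset.range m ×ˢ Finset.range m,
        Kk p (ξ q.1 ω) (ξ q.2 ω)) / (m:ℝ)
    field_simp
  rw [← hsq2, Real.sqrt_sq hterm0]
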